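/- Let (A, B) be a nonempty closed convex proximal parallel pair in a real Hilbert space X, with B = A + h. Then (A, B) has the rectangle property; that is, ‖x + h − y‖ = ‖y + h − x‖ for all x, y ∈ A (indeed ‖x + h − y‖² = ‖x − y‖² + ‖h‖²). -/

import Mathlib

open Filter Topology

/-- dist(A,B) = inf { ‖a - b‖ : a ∈ A, b ∈ B }. -/
noncomputable def setDist {X : Type*} [NormedAddCommGroup X] (A B : Set X) : ℝ :=
  sInf {d : ℝ | ∃ a ∈ A, ∃ b ∈ B, d = ‖a - b‖}

/-- (A,B) is a proximal pair. -/
def IsProximalPair {X : Type*} [NormedAddCommGroup X] (A B : Set X) : Prop :=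
  ∀ x ∈ A, ∀ y ∈ B, ∃ x₁ ∈ A, ∃ y₁ ∈ B,
    ‖x - y₁‖ = setDist A B ∧ ‖y - x₁‖ = setDist A B

/-- (A,B) is a sharp proximal pair: the proximal pair (x₁,y₁) is unique. -/
def IsSharpProximalPair {X : Type*} [NormedAddCommGroup X] (A B : Set X) : Prop :=
  IsProximalPair A B ∧
    ∀ x ∈ A, ∀ y ∈ B, ∀ x₁ ∈ A, ∀ y₁ ∈ B, ∀ x₂ ∈ A, ∀ y₂ ∈ B,
      ‖x - y₁‖ = setDist A B → ‖y - x₁‖ = setDist A B →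
      ‖x - y₂‖ = setDist A B → ‖y - x₂‖ = setDist A B → x₁ = x₂ ∧ y₁ = y₂

/-- (A,B) is a proximal parallel pair: a sharp proximal pair with a unique
translation vector h such that B = A + h. -/
def IsProximalParallelPair {X : Type*} [NormedAddCommGroup X] (A B : Set X) : Prop :=
  IsSharpProximalPair A B ∧ ∃! h : X, B = (fun a => a + h) '' A

/-- Property UC of the pair (A, B). -/
def PropertyUC {X : Type*} [NormedAddCommGroup X] (A B : Set X) : Prop :=
  ∀ x z y : ℕ → X, (∀ n, x n ∈ A) → (∀ n, z n ∈ A) → (∀ n, y n ∈ B) →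
    Filter.Tendsto (fun n => ‖x n - y n‖) Filter.atTop (nhds (setDist A B)) →
    Filter.Tendsto (fun n => ‖z n - y n‖) Filter.atTop (nhds (setDist A B)) →
    Filter.Tendsto (fun n => ‖x n - z n‖) Filter.atTop (nhds 0)

/-- Rectangle property of a parallel pair (A, A + h). -/
def RectangleProperty {X : Type*} [NormedAddCommGroup X] (A : Set X) (h : X) : Prop :=
  ∀ x ∈ A, ∀ y ∈ A, ‖x + h - y‖ = ‖y + h - x‖

/-- T is asymptotically relatively nonexpansive (with sequence k) on the pair (A,B). -/
def AsympRelNonexpansive {X : Type*} [NormedAddCommGroup X]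
    (A B : Set X) (T : X → X) (k : ℕ → ℝ) : Prop :=
  (∀ n, 1 ≤ k n) ∧ Filter.Tendsto k Filter.atTop (nhds 1) ∧
    ∀ n : ℕ, ∀ x ∈ A, ∀ y ∈ B, ‖T^[n] x - T^[n] y‖ ≤ k n * ‖x - y‖

/-- u_n(x): given the proximal companion x' of x, it is Tⁿ(x') for odd n and Tⁿ(x) for even n. -/
def uSeq {X : Type*} (T : X → X) (x x' : X) (n : ℕ) : X :=
  if Odd n then T^[n] x' else T^[n] x

/-- Weak convergence of a sequence. -/
def WeakConvSeq {X : Type*} [NormedAddCommGroup X] [NormedSpace ℝ X]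
    (u : ℕ → X) (y : X) : Prop :=
  ∀ f : X →L[ℝ] ℝ, Filter.Tendsto (fun n => f (u n)) Filter.atTop (nhds (f y))

/-- ω_w(u): weak subsequential limit points of the sequence u. -/
def omegaW {X : Type*} [NormedAddCommGroup X] [NormedSpace ℝ X] (u : ℕ → X) : Set X :=
  {y | ∃ φ : ℕ → ℕ, StrictMono φ ∧ WeakConvSeq (fun i => u (φ i)) y}

/-- ω(u): norm subsequential limit points of the sequence u. -/
def omegaS {X : Type*} [NormedAddCommGroup X] (u : ℕ → X) : Set X :=
  {y | ∃ φ : ℕ → ℕ, StrictMono φ ∧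
    Filter.Tendsto (fun i => u (φ i)) Filter.atTop (nhds y)}

/-- Every subsequence of u admits a norm-convergent subsequence. -/
def NormSubseqCompact {X : Type*} [NormedAddCommGroup X] (u : ℕ → X) : Prop :=
  ∀ φ : ℕ → ℕ, StrictMono φ → ∃ ψ : ℕ → ℕ, StrictMono ψ ∧ ∃ y : X,
    Filter.Tendsto (fun i => u (φ (ψ i))) Filter.atTop (nhds y)

/-- X has uniformly Kadec-Klee (UKK) norm. -/
def UKKNorm (X : Type*) [NormedAddCommGroup X] [NormedSpace ℝ X] : Prop :=
  ∀ ε : ℝ, 0 < ε → ∃ δ : ℝ, 0 < δ ∧ ∀ (u : ℕ → X) (y : X),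
    (∀ n, ‖u n‖ ≤ 1) → WeakConvSeq u y →
    ε < sInf {d : ℝ | ∃ n m : ℕ, n ≠ m ∧ d = ‖u n - u m‖} → ‖y‖ ≤ 1 - δ

/-- X is nearly uniformly convex: reflexive (the canonical embedding into the
double dual is surjective) with UKK norm. -/
def NearlyUniformlyConvex (X : Type*) [NormedAddCommGroup X] [NormedSpace ℝ X] : Prop :=
  Function.Surjective (NormedSpace.inclusionInDoubleDual ℝ X) ∧ UKKNorm X
/-- Example 2.1: any (closed convex) proximal parallel pair in a real Hilbert space
has the rectangle property; indeed ‖x + h − y‖² = ‖x − y‖² + ‖h‖². -/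
theorem proximal_parallel_pair_rectangle_property_hilbert
    {X : Type*} [NormedAddCommGroup X] [InnerProductSpace ℝ X] [CompleteSpace X]
    (A B : Set X) (h : X) (hAne : A.Nonempty) (hBne : B.Nonempty)
    (hAcl : IsClosed A) (hBcl : IsClosed B) (hAcv : Convex ℝ A) (hBcv : Convex ℝ B)
    (hpair : IsProximalParallelPair A B)
    (hBh : B = (fun a => a + h) '' A) :
    ∀ x ∈ A, ∀ y ∈ A, ‖x + h - y‖ = ‖y + h - x‖ ∧
      ‖x + h - y‖ ^ 2 = ‖x - y‖ ^ 2 + ‖h‖ ^ 2 := by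
  classical
  set d := setDist A B with hd
  have hlb : ∀ a ∈ A, ∀ b ∈ B, d ≤ ‖a - b‖ := by
    intro a ha b hb
    apply csInf_le
    · refine ⟨0, ?_⟩
      rintro r ⟨a', _, b', _, rfl⟩
      positivity
    · exact ⟨a, ha, b, hb, rfl⟩
  obtain ⟨y0, hy0⟩ := hBne
  -- Key rigidity: any two minimizing pairs have the same difference vector.
  have key : ∀ x ∈ A, ∀ y ∈ B, ∀ x' ∈ A, ∀ y' ∈ B,
      ‖x - y‖ = d → ‖x' - y'‖ = d → x - y = x' - y' := by
    intro x hx y hy x' hx' y' hy' h1 h2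
    have hm : (1/2 : ℝ) • x + (1/2 : ℝ) • x' ∈ A :=
      hAcv hx hx' (by norm_num) (by norm_num) (by norm_num)
    have hb : (1/2 : ℝ) • y + (1/2 : ℝ) • y' ∈ B :=
      hBcv hy hy' (by norm_num) (by norm_num) (by norm_num)
    have h3 := hlb _ hm _ hb
    have e1 : ((1/2:ℝ) • x + (1/2:ℝ) • x') - ((1/2:ℝ) • y + (1/2:ℝ) • y')
        = (1/2 : ℝ) • ((x - y) + (x' - y')) := by
      rw [smul_add, smul_sub, smul_sub]; abel
    rw [e1, norm_smul] at h3
    have habs : ‖(1/2 : ℝ)‖ = 1/2 := by norm_num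
    rw [habs] at h3
    have h4 : ‖(x - y) + (x' - y')‖ ≤ 2 * d := by
      calc ‖(x - y) + (x' - y')‖ ≤ ‖x - y‖ + ‖x' - y'‖ := norm_add_le _ _
        _ = 2 * d := by rw [h1, h2]; ring
    have h5 : ‖(x - y) + (x' - y')‖ = 2 * d := by linarith
    have hp := parallelogram_law_with_norm ℝ (x - y) (x' - y')
    rw [h1, h2, h5] at hp
    have h6 : ‖(x - y) - (x' - y')‖ * ‖(x - y) - (x' - y')‖ = 0 := by nlinarith
    exact sub_eq_zero.mp (norm_eq_zero.mp (mul_self_eq_zero.mp h6))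
  have hnear : ∀ x ∈ A, ∃ yx ∈ B, ‖x - yx‖ = d := by
    intro x hx
    obtain ⟨x₁, hx₁, y₁, hy₁, hh1, hh2⟩ := hpair.1.1 x hx y0 hy0
    exact ⟨y₁, hy₁, hh1⟩
  obtain ⟨x0, hx0⟩ := hAne
  obtain ⟨yx0, hyx0B, hyx0⟩ := hnear x0 hx0
  set w := yx0 - x0 with hw
  -- B = A + w
  have hBw : B = (fun a => a + w) '' A := by
    ext b
    constructor
    · intro hb
      obtain ⟨x₁, hx₁, y₁, hy₁, hh1, hh2⟩ := hpair.1.1 x0 hx0 b hb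
      have hb2 : ‖x₁ - b‖ = d := by rw [norm_sub_rev]; exact hh2
      have hk := key x₁ hx₁ b hb x0 hx0 yx0 hyx0B hb2 hyx0
      refine ⟨x₁, hx₁, ?_⟩
      show x₁ + w = b
      have e2 : b = x₁ - (x₁ - b) := by abel
      rw [e2, hk, hw]; abel
    · rintro ⟨a, ha, rfl⟩
      obtain ⟨ya, hyaB, hya⟩ := hnear a ha
      have hk := key a ha ya hyaB x0 hx0 yx0 hyx0B hya hyx0
      have e2 : ya = a - (a - ya) := by abel
      have hya2 : a + w = ya := by rw [e2, hk, hw]; abel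
      simpa [hya2] using hyaB
  have hhw : h = w := hpair.2.unique hBh hBw
  have hdh : d = ‖h‖ := by
    have e3 : x0 - yx0 = -h := by rw [hhw, hw]; abel
    rw [← hyx0, e3, norm_neg]
  -- Orthogonality: ⟪y - x, h⟫ ≥ 0 for all x, y ∈ A
  have hortho : ∀ x ∈ A, ∀ y ∈ A, 0 ≤ (inner ℝ (y - x) h : ℝ) := by
    intro x hx y hy
    have hstep : ∀ t : ℝ, 0 < t → t ≤ 1 →
        0 ≤ t ^ 2 * ‖y - x‖ ^ 2 + 2 * t * (inner ℝ (y - x) h : ℝ) := by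
      intro t ht0 ht1
      have hxt : (1 - t) • x + t • y ∈ A := hAcv hx hy (by linarith) ht0.le (by ring)
      have hbt : ((1 - t) • x + t • y) + h ∈ B := by
        rw [hBh]; exact ⟨_, hxt, rfl⟩
      have hle := hlb x hx _ hbt
      have e4 : x - (((1 - t) • x + t • y) + h) = -(t • (y - x) + h) := by
        module
      rw [e4, norm_neg] at hle
      rw [hdh] at hle
      have hsq : ‖h‖ ^ 2 ≤ ‖t • (y - x) + h‖ ^ 2 := by
        have := norm_nonneg (t • (y - x) + h)
        nlinarith [norm_nonneg h]
      rw [norm_add_sq_real, norm_smul, real_inner_smul_left] at hsq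
      have habs : ‖t‖ = t := abs_of_pos ht0
      rw [habs] at hsq
      nlinarith
    by_contra hc
    push_neg at hc
    set c : ℝ := inner ℝ (y - x) h with hcdef
    set K : ℝ := ‖y - x‖ ^ 2 with hK
    have hK0 : 0 ≤ K := by positivity
    rcases eq_or_lt_of_le hK0 with hKz | hKp
    · have := hstep 1 one_pos le_rfl
      rw [← hKz] at this
      nlinarith
    · have ht0 : 0 < min 1 (-c / K) := by
        apply lt_min one_pos
        apply div_pos (by linarith) hKp
      have hts := hstep _ ht0 (min_le_left _ _)
      have htK : (min 1 (-c / K)) * K ≤ -c := by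
        rw [← le_div_iff₀ hKp]
        exact min_le_right _ _
      nlinarith [sq_nonneg (min 1 (-c / K))]
  have hinner : ∀ x ∈ A, ∀ y ∈ A, (inner ℝ (x - y) h : ℝ) = 0 := by
    intro x hx y hy
    have h1 := hortho x hx y hy
    have h2 := hortho y hy x hx
    have e5 : (inner ℝ (y - x) h : ℝ) = -(inner ℝ (x - y) h : ℝ) := by
      rw [← inner_neg_left]; congr 1; abel
    rw [e5] at h1
    linarith
  intro x hx y hy
  have hsq : ‖x + h - y‖ ^ 2 = ‖x - y‖ ^ 2 + ‖h‖ ^ 2 := by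
    have e6 : x + h - y = (x - y) + h := by abel
    rw [e6, norm_add_sq_real, hinner x hx y hy]
    ring
  have hsq' : ‖y + h - x‖ ^ 2 = ‖x - y‖ ^ 2 + ‖h‖ ^ 2 := by
    have e6 : y + h - x = (y - x) + h := by abel
    rw [e6, norm_add_sq_real, hinner y hy x hx, norm_sub_rev]
    ring
  refine ⟨?_, hsq⟩
  have := hsq.trans hsq'.symm
  nlinarith [norm_nonneg (x + h - y), norm_nonneg (y + h - x)]
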